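/- Assume π⁻ ≤ α_r·πʷ ≤ π⁺. For all g₁, g₂ with Γ_EX < g₁ ≤ g₂, the value function satisfies Π*(g₂) − Π*(g₁) = π⁻·(g₂ − g₁); in particular the maximum profit increases with renewable generation at rate π⁻ in the export region. -/
import Mathlib


open Set

noncomputable section

/-- Net electricity exchange. -/
def netz (αr ηh wh wr g : ℝ) : ℝ := wr / αr - wh / ηh - g

/-- Electricity payment under net metering. -/
def epay (πp πm π0 αr ηh wh wr g : ℝ) : ℝ :=
  πp * max (netz αr ηh wh wr g) 0 + πm * min (netz αr ηh wh wr g) 0 + π0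

/-- WDP profit. -/
def profit (πw πp πm π0 αr αh ηh : ℝ) (C : ℝ → ℝ) (wh wr g : ℝ) : ℝ :=
  πw * (wh + wr) - epay πp πm π0 αr ηh wh wr g - C (wh / αh)

/-- clamp(x, a, b) = max(a, min(x, b)). -/
def clampR (x a b : ℝ) : ℝ := max a (min x b)

/-- Value function: sup of profit over the feasible rectangle. -/
def Pstar (πw πp πm π0 αr αh ηh : ℝ) (C : ℝ → ℝ) (wlh wuh wlr wur g : ℝ) : ℝ :=
  sSup ((fun p : ℝ × ℝ => profit πw πp πm π0 αr αh ηh C p.1 p.2 g) ''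
    (Icc wlh wuh ×ˢ Icc wlr wur))

/-- In the export region, the sup is attained at (W(πm), wur) and the value is affine in g. -/
lemma pstar_eq_EX (πp πm π0 πw αh ηh αr wlh wuh wlr wur Wm : ℝ) (C : ℝ → ℝ)
    (hπ : πm ≤ πp) (hηh : 0 < ηh) (hαr : 0 < αr) (hwrb : wlr ≤ wur)
    (hWmem : Wm ∈ Icc wlh wuh)
    (hWopt : ∀ w ∈ Icc wlh wuh,
      (πw + πm / ηh) * w - C (w / αh) ≤ (πw + πm / ηh) * Wm - C (Wm / αh))
    (hmid1 : πm ≤ αr * πw)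
    (g : ℝ) (hg : wur / αr - Wm / ηh < g) :
    Pstar πw πp πm π0 αr αh ηh C wlh wuh wlr wur g =
      πw * (Wm + wur) - (πm * (wur / αr - Wm / ηh - g) + π0) - C (Wm / αh) := by
  have hz : netz αr ηh Wm wur g < 0 := by
    simp only [netz]; linarith
  have hval : profit πw πp πm π0 αr αh ηh C Wm wur g =
      πw * (Wm + wur) - (πm * (wur / αr - Wm / ηh - g) + π0) - C (Wm / αh) := by
    simp only [profit, epay, netz] at *
    rw [max_eq_right hz.le, min_eq_left hz.le]
    ring
  have hub : ∀ q ∈ ((fun p : ℝ × ℝ => profit πw πp πm π0 αr αh ηh C p.1 p.2 g) ''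
      (Icc wlh wuh ×ˢ Icc wlr wur)),
      q ≤ πw * (Wm + wur) - (πm * (wur / αr - Wm / ηh - g) + π0) - C (Wm / αh) := by
    rintro q ⟨⟨wh, wr⟩, ⟨hwh, hwr⟩, rfl⟩
    rw [← hval]
    have h1 : πm * (wr / αr - wh / ηh - g) ≤
        πp * max (netz αr ηh wh wr g) 0 + πm * min (netz αr ηh wh wr g) 0 := by
      have hmm : max (netz αr ηh wh wr g) 0 + min (netz αr ηh wh wr g) 0
          = netz αr ηh wh wr g := by
        rw [max_add_min]; ring
      have : πm * max (netz αr ηh wh wr g) 0 ≤ πp * max (netz αr ηh wh wr g) 0 :=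
        mul_le_mul_of_nonneg_right hπ (le_max_right _ 0)
      simp only [netz] at hmm this ⊢
      have hmm2 : πm * ((wr / αr - wh / ηh - g) ⊔ 0) + πm * ((wr / αr - wh / ηh - g) ⊓ 0)
          = πm * (wr / αr - wh / ηh - g) := by rw [← mul_add, hmm]
      linarith [this, hmm2]
    have h2 : (πw + πm / ηh) * wh - C (wh / αh) ≤ (πw + πm / ηh) * Wm - C (Wm / αh) :=
      hWopt wh hwh
    have h3 : (πw - πm / αr) * wr ≤ (πw - πm / αr) * wur := by
      apply mul_le_mul_of_nonneg_left hwr.2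
      have : πm / αr ≤ πw := by
        rw [div_le_iff₀ hαr]; linarith [hmid1, mul_comm πw αr]
      linarith
    simp only [profit, epay, netz] at *
    have hηh' : ηh ≠ 0 := ne_of_gt hηh
    have hαr' : αr ≠ 0 := ne_of_gt hαr
    have e1 : πm * (wr / αr - wh / ηh - g)
        = πm / αr * wr - πm / ηh * wh - πm * g := by ring
    have e2 : πm * (wur / αr - Wm / ηh - g)
        = πm / αr * wur - πm / ηh * Wm - πm * g := by ring
    nlinarith [h1, h2, h3, e1, e2]
  have hmem : πw * (Wm + wur) - (πm * (wur / αr - Wm / ηh - g) + π0) - C (Wm / αh) ∈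
      ((fun p : ℝ × ℝ => profit πw πp πm π0 αr αh ηh C p.1 p.2 g) ''
      (Icc wlh wuh ×ˢ Icc wlr wur)) := by
    refine ⟨(Wm, wur), ⟨hWmem, ⟨hwrb, le_refl _⟩⟩, hval⟩
  exact IsGreatest.csSup_eq ⟨hmem, hub⟩

/-- in the export region, the value function grows at rate π⁻. -/
theorem value_slope_EX
    (πp πm π0 πw αh ηh αr wlh wuh wlr wur : ℝ) (C : ℝ → ℝ)
    (hπ : πm ≤ πp) (hπm : 0 ≤ πm) (hπw : 0 ≤ πw)
    (hαh : 0 < αh) (hηh : 0 < ηh) (hαr : 0 < αr)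
    (hwlh : 0 ≤ wlh) (hwhb : wlh ≤ wuh) (hwlr : 0 ≤ wlr) (hwrb : wlr ≤ wur)
    (hC : StrictConvexOn ℝ univ C) (hCd : Differentiable ℝ C) (hCm : Monotone C)
    (Wfun : ℝ → ℝ)
    (hWfun : ∀ δ : ℝ, Wfun δ ∈ Icc wlh wuh ∧
      ∀ w ∈ Icc wlh wuh,
        (πw + δ / ηh) * w - C (w / αh) ≤ (πw + δ / ηh) * Wfun δ - C (Wfun δ / αh))
    (hmid1 : πm ≤ αr * πw) (hmid2 : αr * πw ≤ πp) :
    ∀ g₁ g₂ : ℝ, wur / αr - Wfun πm / ηh < g₁ → g₁ ≤ g₂ →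
      Pstar πw πp πm π0 αr αh ηh C wlh wuh wlr wur g₂ -
        Pstar πw πp πm π0 αr αh ηh C wlh wuh wlr wur g₁ = πm * (g₂ - g₁) := by
  intro g₁ g₂ hg1 hg12
  have hg2 : wur / αr - Wfun πm / ηh < g₂ := lt_of_lt_of_le hg1 hg12
  rw [pstar_eq_EX πp πm π0 πw αh ηh αr wlh wuh wlr wur (Wfun πm) C hπ hηh hαr hwrb
      (hWfun πm).1 (hWfun πm).2 hmid1 g₂ hg2,
    pstar_eq_EX πp πm π0 πw αh ηh αr wlh wuh wlr wur (Wfun πm) C hπ hηh hαr hwrb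
      (hWfun πm).1 (hWfun πm).2 hmid1 g₁ hg1]
  ring
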